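/- Let f : V → ℝ be smooth on an open set V ⊆ ℝ² with f, f_y and f_u nowhere zero on V, and set J21 = f·f_{yy}/f_y², J22 = f·f_{yu}/(f_y·f_u), ∇₁ = (f/f_y)·∂/∂y, ∇₂ = (f/f_u)·∂/∂u. Then on V the syzygy ∇₂(J21) − J21 + J21·J22 = ∇₁(J22) − J22 + J22² holds identically. -/

import Mathlib

/-- Partial derivative in the first variable. -/
noncomputable def pd1 (f : ℝ → ℝ → ℝ) : ℝ → ℝ → ℝ := fun y u => deriv (fun s => f s u) y

/-- Partial derivative in the second variable. -/
noncomputable def pd2 (f : ℝ → ℝ → ℝ) : ℝ → ℝ → ℝ := fun y u => deriv (f y) u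

/-- Second-order differential invariant `J21 = f·f_yy / f_y²`. -/
noncomputable def J21 (f : ℝ → ℝ → ℝ) : ℝ → ℝ → ℝ := fun y u =>
  f y u * pd1 (pd1 f) y u / (pd1 f y u) ^ 2

/-- Second-order differential invariant `J22 = f·f_yu / (f_y·f_u)`. -/
noncomputable def J22 (f : ℝ → ℝ → ℝ) : ℝ → ℝ → ℝ := fun y u =>
  f y u * pd2 (pd1 f) y u / (pd1 f y u * pd2 f y u)

/-- Third-order differential invariant `J31 = f²·f_yyy / f_y³`. -/
noncomputable def J31 (f : ℝ → ℝ → ℝ) : ℝ → ℝ → ℝ := fun y u =>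
  f y u ^ 2 * pd1 (pd1 (pd1 f)) y u / (pd1 f y u) ^ 3

/-- Third-order differential invariant `J32 = f²·f_yyu / (f_y²·f_u)`. -/
noncomputable def J32 (f : ℝ → ℝ → ℝ) : ℝ → ℝ → ℝ := fun y u =>
  f y u ^ 2 * pd2 (pd1 (pd1 f)) y u / ((pd1 f y u) ^ 2 * pd2 f y u)

/-- Third-order differential invariant `J33 = f²·f_yuu/(f_u²·f_y) − J22·f·f_uu/f_u²`. -/
noncomputable def J33 (f : ℝ → ℝ → ℝ) : ℝ → ℝ → ℝ := fun y u =>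
  f y u ^ 2 * pd2 (pd2 (pd1 f)) y u / ((pd2 f y u) ^ 2 * pd1 f y u)
    - J22 f y u * (f y u * pd2 (pd2 f) y u / (pd2 f y u) ^ 2)

/-- Fourth-order differential invariant `J41 = f³·f_yyyy / f_y⁴`. -/
noncomputable def J41 (f : ℝ → ℝ → ℝ) : ℝ → ℝ → ℝ := fun y u =>
  f y u ^ 3 * pd1 (pd1 (pd1 (pd1 f))) y u / (pd1 f y u) ^ 4

/-- Fourth-order differential invariant
`J44 = f³·f_yuuu/(f_y·f_u³) − 3·J33·f·f_uu/f_u² − J22·f²·f_uuu/f_u³`. -/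
noncomputable def J44 (f : ℝ → ℝ → ℝ) : ℝ → ℝ → ℝ := fun y u =>
  f y u ^ 3 * pd2 (pd2 (pd2 (pd1 f))) y u / (pd1 f y u * (pd2 f y u) ^ 3)
    - 3 * J33 f y u * (f y u * pd2 (pd2 f) y u / (pd2 f y u) ^ 2)
    - J22 f y u * (f y u ^ 2 * pd2 (pd2 (pd2 f)) y u / (pd2 f y u) ^ 3)

/-- The invariant derivation `∇₁ = (f/f_y)·∂/∂y` applied to `g`. -/
noncomputable def nab1 (f g : ℝ → ℝ → ℝ) : ℝ → ℝ → ℝ := fun y u =>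
  f y u / pd1 f y u * pd1 g y u

/-- The invariant derivation `∇₂ = (f/f_u)·∂/∂u` applied to `g`. -/
noncomputable def nab2 (f g : ℝ → ℝ → ℝ) : ℝ → ℝ → ℝ := fun y u =>
  f y u / pd2 f y u * pd2 g y u

open Filter Topology

private lemma hasDerivAt_slice1 {G : ℝ × ℝ → ℝ} {y u : ℝ}
    (h : DifferentiableAt ℝ G (y, u)) :
    HasDerivAt (fun s => G (s, u)) (fderiv ℝ G (y, u) (1, 0)) y := by
  have hl : HasDerivAt (fun s : ℝ => (s, u)) ((1 : ℝ), (0 : ℝ)) y :=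
    (hasDerivAt_id y).prodMk (hasDerivAt_const y u)
  simpa [Function.comp_def] using h.hasFDerivAt.comp_hasDerivAt y hl

private lemma hasDerivAt_slice2 {G : ℝ × ℝ → ℝ} {y u : ℝ}
    (h : DifferentiableAt ℝ G (y, u)) :
    HasDerivAt (fun t => G (y, t)) (fderiv ℝ G (y, u) (0, 1)) u := by
  have hl : HasDerivAt (fun t : ℝ => (y, t)) ((0 : ℝ), (1 : ℝ)) u :=
    (hasDerivAt_const u y).prodMk (hasDerivAt_id u)
  simpa [Function.comp_def] using h.hasFDerivAt.comp_hasDerivAt u hl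

private lemma fderiv_comm {G : ℝ × ℝ → ℝ} {p : ℝ × ℝ}
    (h : ContDiffAt ℝ (⊤ : ℕ∞) G p) (v w : ℝ × ℝ) :
    fderiv ℝ (fun q => fderiv ℝ G q v) p w = fderiv ℝ (fun q => fderiv ℝ G q w) p v := by
  have hd : DifferentiableAt ℝ (fderiv ℝ G) p :=
    (h.fderiv_right (m := (⊤ : ℕ∞)) (by simp)).differentiableAt (by simp)
  have he : ∀ v : ℝ × ℝ, HasFDerivAt (fun q => fderiv ℝ G q v)
      ((fderiv ℝ (fderiv ℝ G) p).flip v) p := by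
    intro v
    simpa using hd.hasFDerivAt.clm_apply (hasFDerivAt_const v p)
  rw [(he v).fderiv, (he w).fderiv]
  exact (h.isSymmSndFDerivAt (by simp; exact WithTop.coe_le_coe.2 le_top)).eq w v

/-- First-variable directional derivative, as a function on the plane. -/
private noncomputable def DD1 (G : ℝ × ℝ → ℝ) : ℝ × ℝ → ℝ := fun q => fderiv ℝ G q (1, 0)

/-- Second-variable directional derivative, as a function on the plane. -/
private noncomputable def DD2 (G : ℝ × ℝ → ℝ) : ℝ × ℝ → ℝ := fun q => fderiv ℝ G q (0, 1)

private lemma DD1_smooth {V : Set (ℝ × ℝ)} (hV : IsOpen V) {G : ℝ × ℝ → ℝ}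
    (hG : ContDiffOn ℝ (⊤ : ℕ∞) G V) : ContDiffOn ℝ (⊤ : ℕ∞) (DD1 G) V :=
  (hG.fderiv_of_isOpen hV (by simp)).clm_apply contDiffOn_const

private lemma DD2_smooth {V : Set (ℝ × ℝ)} (hV : IsOpen V) {G : ℝ × ℝ → ℝ}
    (hG : ContDiffOn ℝ (⊤ : ℕ∞) G V) : ContDiffOn ℝ (⊤ : ℕ∞) (DD2 G) V :=
  (hG.fderiv_of_isOpen hV (by simp)).clm_apply contDiffOn_const

private lemma diffAt_of_smoothOn {V : Set (ℝ × ℝ)} (hV : IsOpen V) {G : ℝ × ℝ → ℝ}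
    (hG : ContDiffOn ℝ (⊤ : ℕ∞) G V) {q : ℝ × ℝ} (hq : q ∈ V) :
    DifferentiableAt ℝ G q :=
  (hG.contDiffAt (hV.mem_nhds hq)).differentiableAt (by norm_cast)

private lemma pd1_eq {H : ℝ → ℝ → ℝ} {G : ℝ × ℝ → ℝ} {V : Set (ℝ × ℝ)} (hV : IsOpen V)
    (hHG : ∀ q ∈ V, H q.1 q.2 = G q) (hG : ContDiffOn ℝ (⊤ : ℕ∞) G V)
    {y u : ℝ} (hq : (y, u) ∈ V) : pd1 H y u = DD1 G (y, u) := by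
  have hd := diffAt_of_smoothOn hV hG hq
  have heq : (fun s => H s u) =ᶠ[𝓝 y] (fun s => G (s, u)) := by
    have hop : IsOpen {s : ℝ | (s, u) ∈ V} := hV.preimage (by fun_prop)
    filter_upwards [hop.mem_nhds hq] with s hs using hHG (s, u) hs
  show deriv (fun s => H s u) y = _
  rw [heq.deriv_eq]
  exact (hasDerivAt_slice1 hd).deriv

private lemma pd2_eq {H : ℝ → ℝ → ℝ} {G : ℝ × ℝ → ℝ} {V : Set (ℝ × ℝ)} (hV : IsOpen V)
    (hHG : ∀ q ∈ V, H q.1 q.2 = G q) (hG : ContDiffOn ℝ (⊤ : ℕ∞) G V)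
    {y u : ℝ} (hq : (y, u) ∈ V) : pd2 H y u = DD2 G (y, u) := by
  have hd := diffAt_of_smoothOn hV hG hq
  have heq : (fun t => H y t) =ᶠ[𝓝 u] (fun t => G (y, t)) := by
    have hop : IsOpen {t : ℝ | (y, t) ∈ V} := hV.preimage (by fun_prop)
    filter_upwards [hop.mem_nhds hq] with t ht using hHG (y, t) ht
  show deriv (fun t => H y t) u = _
  rw [heq.deriv_eq]
  exact (hasDerivAt_slice2 hd).deriv

/-- The syzygy `∇₂(J21) − J21 + J21·J22 = ∇₁(J22) − J22 + J22²` on an open set where `f`,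
`f_y` and `f_u` are nowhere zero. -/
theorem syzygy_third_order (V : Set (ℝ × ℝ)) (hV : IsOpen V) (f : ℝ → ℝ → ℝ)
    (hf : ContDiffOn ℝ (⊤ : ℕ∞) (fun p : ℝ × ℝ => f p.1 p.2) V)
    (hf0 : ∀ y u : ℝ, (y, u) ∈ V → f y u ≠ 0)
    (hfy : ∀ y u : ℝ, (y, u) ∈ V → pd1 f y u ≠ 0)
    (hfu : ∀ y u : ℝ, (y, u) ∈ V → pd2 f y u ≠ 0) :
    ∀ y u : ℝ, (y, u) ∈ V →
      nab2 f (J21 f) y u - J21 f y u + J21 f y u * J22 f y u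
        = nab1 f (J22 f) y u - J22 f y u + (J22 f y u) ^ 2 := by
  intro y u hyu
  obtain ⟨F, hF⟩ : ∃ F : ℝ × ℝ → ℝ, F = fun p : ℝ × ℝ => f p.1 p.2 := ⟨_, rfl⟩
  rw [← hF] at hf
  have hfF : ∀ q ∈ V, f q.1 q.2 = F q := by intro q hq; rw [hF]
  -- smoothness of iterated directional derivatives
  have hG1 : ContDiffOn ℝ (⊤ : ℕ∞) (DD1 F) V := DD1_smooth hV hf
  have hG2 : ContDiffOn ℝ (⊤ : ℕ∞) (DD2 F) V := DD2_smooth hV hf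
  have hG11 : ContDiffOn ℝ (⊤ : ℕ∞) (DD1 (DD1 F)) V := DD1_smooth hV hG1
  have hG12 : ContDiffOn ℝ (⊤ : ℕ∞) (DD2 (DD1 F)) V := DD2_smooth hV hG1
  -- identification of the iterated `pd`s with the directional derivatives, on `V`
  have hpd1V : ∀ q ∈ V, pd1 f q.1 q.2 = DD1 F q := fun q hq => pd1_eq hV hfF hf hq
  have hpd2V : ∀ q ∈ V, pd2 f q.1 q.2 = DD2 F q := fun q hq => pd2_eq hV hfF hf hq
  have hpd11V : ∀ q ∈ V, pd1 (pd1 f) q.1 q.2 = DD1 (DD1 F) q :=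
    fun q hq => pd1_eq hV hpd1V hG1 hq
  have hpd12V : ∀ q ∈ V, pd2 (pd1 f) q.1 q.2 = DD2 (DD1 F) q :=
    fun q hq => pd2_eq hV hpd1V hG1 hq
  have hb : pd1 f y u = DD1 F (y, u) := hpd1V (y, u) hyu
  have hc : pd2 f y u = DD2 F (y, u) := hpd2V (y, u) hyu
  have hd : pd1 (pd1 f) y u = DD1 (DD1 F) (y, u) := hpd11V (y, u) hyu
  have he : pd2 (pd1 f) y u = DD2 (DD1 F) (y, u) := hpd12V (y, u) hyu
  have hfa : f y u = F (y, u) := hfF (y, u) hyu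
  -- nonvanishing
  have hbne : DD1 F (y, u) ≠ 0 := hb ▸ hfy y u hyu
  have hcne : DD2 F (y, u) ≠ 0 := hc ▸ hfu y u hyu
  -- symmetry of second derivatives
  have hFat : ContDiffAt ℝ (⊤ : ℕ∞) F (y, u) := hf.contDiffAt (hV.mem_nhds hyu)
  have hG1at : ContDiffAt ℝ (⊤ : ℕ∞) (DD1 F) (y, u) := hG1.contDiffAt (hV.mem_nhds hyu)
  have symF : DD1 (DD2 F) (y, u) = DD2 (DD1 F) (y, u) := fderiv_comm hFat (0, 1) (1, 0)
  have symG1 : DD1 (DD2 (DD1 F)) (y, u) = DD2 (DD1 (DD1 F)) (y, u) :=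
    fderiv_comm hG1at (0, 1) (1, 0)
  -- differentiability of the pieces at (y, u)
  have dF : DifferentiableAt ℝ F (y, u) := diffAt_of_smoothOn hV hf hyu
  have dG1 : DifferentiableAt ℝ (DD1 F) (y, u) := diffAt_of_smoothOn hV hG1 hyu
  have dG2 : DifferentiableAt ℝ (DD2 F) (y, u) := diffAt_of_smoothOn hV hG2 hyu
  have dG11 : DifferentiableAt ℝ (DD1 (DD1 F)) (y, u) := diffAt_of_smoothOn hV hG11 hyu
  have dG12 : DifferentiableAt ℝ (DD2 (DD1 F)) (y, u) := diffAt_of_smoothOn hV hG12 hyu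
  -- derivative of J21 along the second variable
  have sF2 : HasDerivAt (fun t => F (y, t)) (DD2 F (y, u)) u := hasDerivAt_slice2 dF
  have sG1_2 : HasDerivAt (fun t => DD1 F (y, t)) (DD2 (DD1 F) (y, u)) u :=
    hasDerivAt_slice2 dG1
  have sG11_2 : HasDerivAt (fun t => DD1 (DD1 F) (y, t)) (DD2 (DD1 (DD1 F)) (y, u)) u :=
    hasDerivAt_slice2 dG11
  have hb2 : (DD1 F (y, u)) ^ 2 ≠ 0 := pow_ne_zero _ hbne
  have hevJ21 : (J21 f y) =ᶠ[𝓝 u]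
      (fun t => F (y, t) * DD1 (DD1 F) (y, t) / (DD1 F (y, t)) ^ 2) := by
    have hop : IsOpen {t : ℝ | (y, t) ∈ V} := hV.preimage (by fun_prop)
    filter_upwards [hop.mem_nhds hyu] with t ht
    simp only [J21]
    rw [show f y t = F (y, t) from hfF (y, t) ht,
      show pd1 (pd1 f) y t = DD1 (DD1 F) (y, t) from hpd11V (y, t) ht,
      show pd1 f y t = DD1 F (y, t) from hpd1V (y, t) ht]
  have h2 : pd2 (J21 f) y u =
      ((DD2 F (y, u) * DD1 (DD1 F) (y, u) + F (y, u) * DD2 (DD1 (DD1 F)) (y, u))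
          * (DD1 F (y, u)) ^ 2
        - F (y, u) * DD1 (DD1 F) (y, u)
          * ((2 : ℕ) * (DD1 F (y, u)) ^ 1 * DD2 (DD1 F) (y, u)))
        / ((DD1 F (y, u)) ^ 2) ^ 2 :=
    (((sF2.mul sG11_2).div (sG1_2.pow 2) hb2).congr_of_eventuallyEq hevJ21).deriv
  -- derivative of J22 along the first variable
  have sF1 : HasDerivAt (fun s => F (s, u)) (DD1 F (y, u)) y := hasDerivAt_slice1 dF
  have sG1_1 : HasDerivAt (fun s => DD1 F (s, u)) (DD1 (DD1 F) (y, u)) y :=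
    hasDerivAt_slice1 dG1
  have sG2_1 : HasDerivAt (fun s => DD2 F (s, u)) (DD1 (DD2 F) (y, u)) y :=
    hasDerivAt_slice1 dG2
  have sG12_1 : HasDerivAt (fun s => DD2 (DD1 F) (s, u)) (DD1 (DD2 (DD1 F)) (y, u)) y :=
    hasDerivAt_slice1 dG12
  have hbc : DD1 F (y, u) * DD2 F (y, u) ≠ 0 := mul_ne_zero hbne hcne
  have hevJ22 : (fun s => J22 f s u) =ᶠ[𝓝 y]
      (fun s => F (s, u) * DD2 (DD1 F) (s, u) / (DD1 F (s, u) * DD2 F (s, u))) := by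
    have hop : IsOpen {s : ℝ | (s, u) ∈ V} := hV.preimage (by fun_prop)
    filter_upwards [hop.mem_nhds hyu] with s hs
    simp only [J22]
    rw [show f s u = F (s, u) from hfF (s, u) hs,
      show pd2 (pd1 f) s u = DD2 (DD1 F) (s, u) from hpd12V (s, u) hs,
      show pd1 f s u = DD1 F (s, u) from hpd1V (s, u) hs,
      show pd2 f s u = DD2 F (s, u) from hpd2V (s, u) hs]
  have h1 : pd1 (J22 f) y u =
      ((DD1 F (y, u) * DD2 (DD1 F) (y, u) + F (y, u) * DD1 (DD2 (DD1 F)) (y, u))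
          * (DD1 F (y, u) * DD2 F (y, u))
        - F (y, u) * DD2 (DD1 F) (y, u)
          * (DD1 (DD1 F) (y, u) * DD2 F (y, u) + DD1 F (y, u) * DD1 (DD2 F) (y, u)))
        / (DD1 F (y, u) * DD2 F (y, u)) ^ 2 :=
    (((sF1.mul sG12_1).div (sG1_1.mul sG2_1) hbc).congr_of_eventuallyEq hevJ22).deriv
  -- assemble
  rw [symG1] at h1
  rw [symF] at h1
  simp only [nab1, nab2, J21, J22]
  rw [h1, h2, hfa, hb, hc, hd, he]
  have hane : F (y, u) ≠ 0 := hfa ▸ hf0 y u hyu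
  field_simp
  ring
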